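/- Let c be a common zero of the normalized recursive polynomial sequence (W_n) with B(c) ≠ 0. Let p be the least positive integer with v^p = 1 and r the least positive integer with v^r = u. Then p ≥ 2, 1 ≤ r ≤ p − 1, and for every n ≥ 1, W_n(c) = 0 if and only if n ≡ r (mod p). -/

import Mathlib

/-- Closed form for a two-term recurrence with distinct (or equal) characteristic
roots `α`, `β`. -/
lemma stmt8_closed_form (a b α β X Y : ℂ) (hα : α ^ 2 = a * α + b)
    (hβ : β ^ 2 = a * β + b)
    (w : ℕ → ℂ) (hrec : ∀ n, w (n + 2) = a * w (n + 1) + b * w n)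
    (h0 : w 0 = X + Y) (h1 : w 1 = X * α + Y * β) :
    ∀ n, w n = X * α ^ n + Y * β ^ n := by
  intro n
  induction n using Nat.strong_induction_on with
  | _ n ih =>
    match n with
    | 0 => simpa using h0
    | 1 => simpa using h1
    | (m + 2) =>
      have e1 : α ^ (m + 2) = α ^ m * (a * α + b) := by rw [← hα]; ring
      have e2 : β ^ (m + 2) = β ^ m * (a * β + b) := by rw [← hβ]; ring
      rw [hrec, ih (m + 1) (by omega), ih m (by omega), e1, e2]; ring

/-- Closed form in the degenerate (double root) case. -/
lemma stmt8_closed_form_deg (a b α X Y : ℂ) (ha : a = 2 * α) (hb : b = -α ^ 2)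
    (w : ℕ → ℂ) (hrec : ∀ n, w (n + 2) = a * w (n + 1) + b * w n)
    (h0 : w 0 = X) (h1 : w 1 = (X + Y) * α) :
    ∀ n, w n = (X + Y * n) * α ^ n := by
  intro n
  induction n using Nat.strong_induction_on with
  | _ n ih =>
    match n with
    | 0 => simpa using h0
    | 1 => simpa using h1
    | (m + 2) =>
      rw [hrec, ih (m + 1) (by omega), ih m (by omega), ha, hb]
      push_cast
      ring

theorem stmt_8 (A B : Polynomial ℂ) (W : ℕ → Polynomial ℂ) (hW0 : W 0 = 1)
    (hrec : ∀ n, 2 ≤ n → W n = A * W (n - 1) + B * W (n - 2))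
    (c s : ℂ) (hB : B.eval c ≠ 0)
    (hs : s ^ 2 = A.eval c ^ 2 + 4 * B.eval c)
    (hcommon : ∃ i j : ℕ, i ≠ j ∧ (W i).eval c = 0 ∧ (W j).eval c = 0)
    (u v : ℂ)
    (hu : u = ((2 * (W 1).eval c - A.eval c - s) / 2) /
              ((2 * (W 1).eval c - A.eval c + s) / 2))
    (hv : v = (A.eval c + s) / (A.eval c - s))
    (p r : ℕ)
    (hp : 0 < p ∧ v ^ p = 1 ∧ ∀ m, 0 < m → v ^ m = 1 → p ≤ m)
    (hr : 0 < r ∧ v ^ r = u ∧ ∀ m, 0 < m → v ^ m = u → r ≤ m) :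
    2 ≤ p ∧ 1 ≤ r ∧ r ≤ p - 1 ∧ ∀ n, 1 ≤ n → ((W n).eval c = 0 ↔ n % p = r) := by
  obtain ⟨hp1, hpv, hpmin⟩ := hp
  obtain ⟨hr1, hrv, hrmin⟩ := hr
  set a := A.eval c with ha
  set b := B.eval c with hb
  set w1 := (W 1).eval c with hw1
  set w : ℕ → ℂ := fun n => (W n).eval c with hwdef
  have hw0 : w 0 = 1 := by simp [hwdef, hW0]
  have hwrec : ∀ n, w (n + 2) = a * w (n + 1) + b * w n := by
    intro n
    have h := hrec (n + 2) (by omega)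
    have h1 : n + 2 - 1 = n + 1 := by omega
    have h2 : n + 2 - 2 = n := by omega
    rw [h1, h2] at h
    simp only [hwdef, h, Polynomial.eval_add, Polynomial.eval_mul]
    rfl
  obtain ⟨i, j, hij, hwi, hwj⟩ := hcommon
  have hwi : w i = 0 := hwi
  have hwj : w j = 0 := hwj
  -- First: s ≠ 0
  have hs0 : s ≠ 0 := by
    intro h0
    rw [h0] at hs
    have ha2 : a = 2 * (a / 2) := by ring
    have haz : a ≠ 0 := by
      intro h'
      apply hB
      have : (0 : ℂ) = a ^ 2 + 4 * b := by simpa using hs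
      rw [h'] at this
      have : (4 : ℂ) * b = 0 := by linear_combination -this
      simpa using this
    have hb2 : b = -(a / 2) ^ 2 := by linear_combination (-1/4 : ℂ) * hs
    have hcf := stmt8_closed_form_deg a b (a / 2) 1 (2 * w1 / a - 1) ha2 hb2
      w hwrec hw0 (by field_simp; show w1 * 2 = a + (2 * w1 - a); ring)
    have hαz : (a / 2 : ℂ) ≠ 0 := by
      intro h'; exact haz (by field_simp at h'; simpa using h')
    have hi := hcf i
    have hj := hcf j
    rw [hwi] at hi; rw [hwj] at hj
    have hi' : (1 : ℂ) + (2 * w1 / a - 1) * i = 0 :=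
      by
        rcases mul_eq_zero.mp hi.symm with h | h
        · exact h
        · exact absurd h (pow_ne_zero _ hαz)
    have hj' : (1 : ℂ) + (2 * w1 / a - 1) * j = 0 :=
      by
        rcases mul_eq_zero.mp hj.symm with h | h
        · exact h
        · exact absurd h (pow_ne_zero _ hαz)
    have hYz : (2 * w1 / a - 1 : ℂ) ≠ 0 := by
      intro h'
      rw [h'] at hi'
      simp at hi'
    have hcij : (i : ℂ) = (j : ℂ) := by
      have h2 : (2 * w1 / a - 1) * ((i : ℂ) - j) = 0 := by linear_combination hi' - hj'
      rcases mul_eq_zero.mp h2 with h | h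
      · exact absurd h hYz
      · exact sub_eq_zero.mp h
    exact hij (Nat.cast_injective hcij)
  -- Nondegenerate case setup
  set α := (a + s) / 2 with hαdef
  set β := (a - s) / 2 with hβdef
  set gp := (2 * w1 - a + s) / 2 with hgpdef
  set gm := (2 * w1 - a - s) / 2 with hgmdef
  have hαchar : α ^ 2 = a * α + b := by
    rw [hαdef]; linear_combination (1/4 : ℂ) * hs
  have hβchar : β ^ 2 = a * β + b := by
    rw [hβdef]; linear_combination (1/4 : ℂ) * hs
  have hαβ : α * β = -b := by
    rw [hαdef, hβdef]; linear_combination (-1/4 : ℂ) * hs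
  have hαz : α ≠ 0 := by
    intro h; apply hB; have := hαβ; rw [h] at this; simpa using this.symm
  have hβz : β ≠ 0 := by
    intro h; apply hB; have := hαβ; rw [h] at this; simpa using this.symm
  have hcf := stmt8_closed_form a b α β (gp / s) (-(gm / s)) hαchar hβchar w hwrec
    (by rw [show w 0 = 1 from hw0, hgpdef, hgmdef]; field_simp; ring)
    (by rw [hgpdef, hgmdef, hαdef, hβdef]; field_simp; ring)
  have hwn : ∀ n, w n = (gp * α ^ n - gm * β ^ n) / s := by
    intro n; rw [hcf n]; ring
  -- gp ≠ 0
  have hgpz : gp ≠ 0 := by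
    intro h
    have hY1 : -(gm / s) = 1 := by
      have := hw0
      rw [hcf 0, h] at this
      simpa using this
    have := hwi
    rw [hcf i, h, hY1] at this
    simp at this
    exact hβz this.1
  have hu' : u = gm / gp := by rw [hu, hgpdef, hgmdef]
  have has : a - s ≠ 0 := by
    intro h
    apply hβz
    rw [hβdef, h]
    norm_num
  have hv' : v = α / β := by
    rw [hv, hαdef, hβdef]
    rw [div_div_div_eq, div_eq_div_iff has (by intro h; apply has; field_simp at h; simpa using h)]
    ring
  have hvz : v ≠ 0 := by rw [hv']; exact div_ne_zero hαz hβz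
  have hv1 : v ≠ 1 := by
    rw [hv']
    intro h
    have : α = β := by
      field_simp at h; exact h
    rw [hαdef, hβdef] at this
    apply hs0
    linear_combination this
  have hu1 : u ≠ 1 := by
    rw [hu']
    intro h
    have : gm = gp := by
      field_simp at h; exact h
    rw [hgmdef, hgpdef] at this
    apply hs0
    linear_combination -this
  -- key equivalence
  have key : ∀ n, (w n = 0 ↔ v ^ n = u) := by
    intro n
    rw [hwn n, hv', hu', div_pow α β n,
      div_eq_div_iff (pow_ne_zero _ hβz) hgpz, div_eq_zero_iff]
    constructor
    · rintro (h | h)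
      · linear_combination h
      · exact absurd h hs0
    · intro h
      left
      linear_combination h
  -- p ≥ 2
  have hp2 : 2 ≤ p := by
    by_contra h
    have : p = 1 := by omega
    rw [this, pow_one] at hpv
    exact hv1 hpv
  -- mod lemma
  have hmod : ∀ n : ℕ, v ^ (n % p) = v ^ n := by
    intro n
    conv_rhs => rw [← Nat.div_add_mod n p]
    rw [pow_add, pow_mul, hpv, one_pow, one_mul]
  -- r < p
  have hrmodne : r % p ≠ 0 := by
    intro h
    apply hu1
    have := hmod r
    rw [h, pow_zero] at this
    rw [← hrv, ← this]
  have hrlt : r < p := by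
    have h1 : v ^ (r % p) = u := by rw [hmod r, hrv]
    have h2 := hrmin (r % p) (Nat.pos_of_ne_zero hrmodne) h1
    have h3 : r % p < p := Nat.mod_lt _ hp1
    omega
  refine ⟨hp2, hr1, by omega, ?_⟩
  intro n hn
  rw [show (W n).eval c = w n from rfl, key n]
  constructor
  · intro h
    have h1 : v ^ (n % p) = u := by rw [hmod n, h]
    have hne : n % p ≠ 0 := by
      intro h0
      apply hu1
      rw [h0, pow_zero] at h1
      exact h1.symm
    have h2 := hrmin (n % p) (Nat.pos_of_ne_zero hne) h1
    have h3 : v ^ (n % p - r) * v ^ r = v ^ (n % p) := by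
      rw [← pow_add]; congr 1; omega
    have h4 : v ^ (n % p - r) = 1 := by
      have hvr : v ^ r ≠ 0 := pow_ne_zero _ hvz
      apply mul_right_cancel₀ hvr
      rw [one_mul, h3, h1, hrv]
    by_cases hc : n % p - r = 0
    · have h5 : n % p < p := Nat.mod_lt _ hp1
      omega
    · have := hpmin (n % p - r) (Nat.pos_of_ne_zero hc) h4
      have h5 : n % p < p := Nat.mod_lt _ hp1
      omega
  · intro h
    rw [← hmod n, h, hrv]
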